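/- Let A be an abelian group that is the internal direct sum of a family of cyclic subgroups ⟨bᵢ⟩ (i ∈ I). Fix i₀ ∈ I and an element a ∈ A lying in the sum of the other summands with addOrderOf a ∣ addOrderOf b_{i₀}. Then there is a unique automorphism f of A with f(b_{i₀}) = b_{i₀} + a and f(bⱼ) = bⱼ for all j ≠ i₀. -/

import Mathlib

theorem stmt_18 {A : Type*} [AddCommGroup A] {I : Type*} (b : I → A)
    (hgen : (⨆ i, AddSubgroup.zmultiples (b i)) = (⊤ : AddSubgroup A))
    (hindep : iSupIndep fun i => AddSubgroup.zmultiples (b i))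
    (i₀ : I) (a : A)
    (ha : a ∈ ⨆ j ∈ ({i₀}ᶜ : Set I), AddSubgroup.zmultiples (b j))
    (hfin : 0 < addOrderOf (b i₀))
    (hdvd : addOrderOf a ∣ addOrderOf (b i₀)) :
    ∃! f : A ≃+ A, f (b i₀) = b i₀ + a ∧ ∀ j : I, j ≠ i₀ → f (b j) = b j := by
  classical
  -- key lemma: the map n • b i₀ ↦ n • a is well-defined
  have hkey : ∀ n m : ℤ, n • b i₀ = m • b i₀ → n • a = m • a := by
    intro n m h
    have h1 : (n - m) • b i₀ = 0 := by rw [sub_smul, h, sub_self]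
    have h2 : (addOrderOf (b i₀) : ℤ) ∣ (n - m) :=
      addOrderOf_dvd_iff_zsmul_eq_zero.mpr h1
    have h3 : (addOrderOf a : ℤ) ∣ (n - m) :=
      dvd_trans (Int.natCast_dvd_natCast.mpr hdvd) h2
    have h4 : (n - m) • a = 0 := addOrderOf_dvd_iff_zsmul_eq_zero.mp h3
    rw [sub_smul] at h4
    exact sub_eq_zero.mp h4
  -- submodule versions of the subgroups
  set P : I → Submodule ℤ A :=
    fun i => AddSubgroup.toIntSubmodule (AddSubgroup.zmultiples (b i)) with hP
  set q : Submodule ℤ A := ⨆ j ∈ ({i₀}ᶜ : Set I), P j with hq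
  have hdisj : Disjoint (P i₀) q := by
    have h := (hindep.map_orderIso AddSubgroup.toIntSubmodule) i₀
    exact h
  have htop : (⨆ i, P i) = ⊤ := by
    have h := congrArg (AddSubgroup.toIntSubmodule (M := A)) hgen
    rw [OrderIso.map_iSup] at h
    simpa using h
  have hcodis : Codisjoint (P i₀) q := by
    rw [codisjoint_iff_le_sup, ← htop]
    refine iSup_le fun i => ?_
    by_cases hi : i = i₀
    · subst hi; exact le_sup_left
    · exact le_trans (le_iSup₂ (f := fun j (_ : j ∈ ({i₀}ᶜ : Set I)) => P j) i hi) le_sup_right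
  have hcompl : IsCompl (P i₀) q := ⟨hdisj, hcodis⟩
  let π : A →ₗ[ℤ] (P i₀) := Submodule.linearProjOfIsCompl (P i₀) q hcompl
  have hmem : ∀ x : P i₀, ∃ k : ℤ, k • b i₀ = (x : A) := fun x =>
    AddSubgroup.mem_zmultiples_iff.mp x.2
  let rep : P i₀ → ℤ := fun x => (hmem x).choose
  have hrep : ∀ x : P i₀, rep x • b i₀ = (x : A) := fun x => (hmem x).choose_spec
  let ψ : A → A := fun x => rep (π x) • a
  have hψadd : ∀ x y, ψ (x + y) = ψ x + ψ y := by
    intro x y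
    have h1 : rep (π (x + y)) • b i₀ = (rep (π x) + rep (π y)) • b i₀ := by
      rw [hrep, map_add, add_smul, hrep, hrep]
      rfl
    have h2 := hkey _ _ h1
    rw [add_smul] at h2
    exact h2
  let ψH : A →+ A := AddMonoidHom.mk' ψ hψadd
  have hrep0 : ∀ x : P i₀, (x : A) = 0 → rep x • a = 0 := by
    intro x hx
    have h1 : rep x • b i₀ = (0 : ℤ) • b i₀ := by rw [hrep, hx, zero_smul]
    have := hkey _ _ h1
    rwa [zero_smul] at this
  have hψzero : ∀ x : A, π x = 0 → ψ x = 0 := by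
    intro x hx
    exact hrep0 (π x) (by rw [hx]; rfl)
  -- values of ψ
  have hbmem : b i₀ ∈ P i₀ := AddSubgroup.mem_zmultiples (b i₀)
  have hπb₀ : π (b i₀) = ⟨b i₀, hbmem⟩ :=
    Submodule.linearProjOfIsCompl_apply_left hcompl ⟨b i₀, hbmem⟩
  have hψb₀ : ψ (b i₀) = a := by
    show rep (π (b i₀)) • a = a
    rw [hπb₀]
    have h1 : rep ⟨b i₀, hbmem⟩ • b i₀ = (1 : ℤ) • b i₀ := by
      rw [hrep, one_smul]
    have := hkey _ _ h1
    rwa [one_smul] at this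
  have hbq : ∀ j, j ≠ i₀ → b j ∈ q := by
    intro j hj
    have h1 : P j ≤ q := le_iSup₂ (f := fun j (_ : j ∈ ({i₀}ᶜ : Set I)) => P j) j hj
    exact h1 (AddSubgroup.mem_zmultiples (b j))
  have hψbj : ∀ j, j ≠ i₀ → ψ (b j) = 0 := fun j hj =>
    hψzero _ (Submodule.linearProjOfIsCompl_apply_right' hcompl (hbq j hj))
  have haq : a ∈ q := by
    have hq' : AddSubgroup.toIntSubmodule
        (⨆ j ∈ ({i₀}ᶜ : Set I), AddSubgroup.zmultiples (b j)) = q := by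
      rw [OrderIso.map_iSup]
      exact iSup_congr fun j => OrderIso.map_iSup _ _
    rw [← hq']
    exact ha
  have hψa : ψ a = 0 :=
    hψzero _ (Submodule.linearProjOfIsCompl_apply_right' hcompl haq)
  have hψψ : ∀ x, ψ (ψ x) = 0 := by
    intro x
    show ψ (rep (π x) • a) = 0
    show ψH (rep (π x) • a) = 0
    rw [map_zsmul ψH (rep (π x)) a]
    show rep (π x) • ψ a = 0
    rw [hψa, smul_zero]
  -- the automorphism
  have hli : Function.LeftInverse (fun x => x - ψH x) (fun x => x + ψH x) := by
    intro x
    show (x + ψH x) - ψH (x + ψH x) = x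
    rw [map_add]
    have : ψH (ψH x) = 0 := hψψ x
    rw [this, add_zero]
    abel
  have hri : Function.RightInverse (fun x => x - ψH x) (fun x => x + ψH x) := by
    intro x
    show (x - ψH x) + ψH (x - ψH x) = x
    rw [map_sub]
    have : ψH (ψH x) = 0 := hψψ x
    rw [this, sub_zero]
    abel
  let f : A ≃+ A :=
    { toFun := fun x => x + ψH x
      invFun := fun x => x - ψH x
      left_inv := hli
      right_inv := hri
      map_add' := by intro x y; show (x + y) + ψH (x + y) = (x + ψH x) + (y + ψH y)
                     rw [map_add]; abel }
  have hf1 : f (b i₀) = b i₀ + a := by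
    show b i₀ + ψ (b i₀) = b i₀ + a
    rw [hψb₀]
  have hf2 : ∀ j : I, j ≠ i₀ → f (b j) = b j := by
    intro j hj
    show b j + ψ (b j) = b j
    rw [hψbj j hj, add_zero]
  refine ⟨f, ⟨hf1, hf2⟩, ?_⟩
  intro g hg
  have hle : (⊤ : AddSubgroup A) ≤
      AddMonoidHom.eqLocus (g : A →+ A) (f : A →+ A) := by
    rw [← hgen]
    refine iSup_le fun i => ?_
    refine AddSubgroup.zmultiples_le.mpr ?_
    show g (b i) = f (b i)
    by_cases hi : i = i₀
    · subst hi; rw [hg.1, hf1]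
    · rw [hg.2 i hi, hf2 i hi]
  exact AddEquiv.ext fun x => hle (AddSubgroup.mem_top x)
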